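/- Let P = P(F) be a k-local property of [n]^d-arrays over Σ, let A be an [n]^d-array over Σ that is ε-far from P, and let G ∈ G(n,d,k,w) with w ≥ k. Then at least one of the following holds: (i) there exists a (P,A)-unrepairable G-block; (ii) for at least an ε-fraction of the G-blocks B, the array A contains an F-copy lying inside B̄. -/
import Mathlib


open Finset

/-- `I[:ℓ]`: the set of the `ℓ` smallest elements of `I` (or `I` itself if `|I| < ℓ`). -/
def takeSmallest (I : Finset ℕ) (ℓ : ℕ) : Finset ℕ :=
  I.filter fun x => (I.filter fun y => y ≤ x).card ≤ ℓ

/-- `I[ℓ+1:] = I \ I[:ℓ]`. -/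
def dropSmallest (I : Finset ℕ) (ℓ : ℕ) : Finset ℕ :=
  I \ takeSmallest I ℓ

/-- An `(n,w)`-interval partition: a partition of `[n] = {1,…,n}` into consecutive,
pairwise disjoint intervals `I_1, …, I_t`, each of size `w` or `w+1`, where for `j < j'`
every element of `I j` is smaller than every element of `I j'`. -/
structure IntervalPartition (n w : ℕ) where
  t : ℕ
  I : Fin t → Finset ℕ
  interval : ∀ j, ∃ a b, 1 ≤ a ∧ a ≤ b ∧ b ≤ n ∧ I j = Finset.Icc a b
  size : ∀ j, (I j).card = w ∨ (I j).card = w + 1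
  cover : ∀ x ∈ Finset.Icc 1 n, ∃ j, x ∈ I j
  ordered : ∀ j j' : Fin t, j < j' → ∀ x ∈ I j, ∀ y ∈ I j', x < y

/-- The hypergrid `[n]^d`, as a set of tuples. -/
def cube (n d : ℕ) : Set (Fin d → ℕ) :=
  {x | ∀ i, 1 ≤ x i ∧ x i ≤ n}

/-- The `(n,d,k,w)`-grid induced by an `(n,w)`-interval partition. -/
def gridOf (n d k w : ℕ) (P : IntervalPartition n w) : Set (Fin d → ℕ) :=
  {x ∈ cube n d | ∃ i : Fin d, ∃ j : Fin P.t, x i ∈ takeSmallest (P.I j) (k - 1)}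

/-- `G ∈ 𝒢(n,d,k,w)`: `G` is the grid induced by some `(n,w)`-interval partition. -/
def IsGrid (n d k w : ℕ) (G : Set (Fin d → ℕ)) : Prop :=
  ∃ P : IntervalPartition n w, G = gridOf n d k w P

/-- Two entries of `[n]^d` are neighbors if `∑ i, |x i − y i| = 1`. -/
def Neighbor {d : ℕ} (x y : Fin d → ℕ) : Prop :=
  (∑ i, Nat.dist (x i) (y i)) = 1

/-- A `G`-block: a connected component of the neighborhood graph on `[n]^d \ G`. -/
def IsBlock (n d : ℕ) (G B : Set (Fin d → ℕ)) : Prop :=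
  B.Nonempty ∧ B ⊆ cube n d \ G ∧
    (∀ x ∈ B, ∀ y ∈ B,
      Relation.ReflTransGen
        (fun a b => a ∈ cube n d \ G ∧ b ∈ cube n d \ G ∧ Neighbor a b) x y) ∧
    (∀ x ∈ B, ∀ y, y ∈ cube n d \ G → Neighbor x y → y ∈ B)

/-- The closure `B̄` of a block `B`. -/
def blockClosure (n d k : ℕ) (B : Set (Fin d → ℕ)) : Set (Fin d → ℕ) :=
  {x ∈ cube n d | ∃ y ∈ B, ∀ i, Nat.dist (x i) (y i) < k}

/-- The boundary `∂B = B̄ \ B` of a block `B`. -/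
def blockBoundary (n d k : ℕ) (B : Set (Fin d → ℕ)) : Set (Fin d → ℕ) :=
  blockClosure n d k B \ B

/-- A valid location of a width-`k` subarray in `[n]^d`: an element of `[n−k+1]^d`. -/
def ValidLoc (n d k : ℕ) (a : Fin d → ℕ) : Prop :=
  ∀ i, 1 ≤ a i ∧ a i ≤ n - k + 1

/-- The width-`k` box with lowest corner `a`: `{a_1,…,a_1+k−1} × ⋯ × {a_d,…,a_d+k−1}`. -/
def kbox (d k : ℕ) (a : Fin d → ℕ) : Set (Fin d → ℕ) :=
  {x | ∀ i, a i ≤ x i ∧ x i ≤ a i + k - 1}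

/-- Some forbidden pattern of `F` occurs as a consecutive subarray of `A` at location `a`;
patterns are compared on `[k]^d`. -/
def HasCopyAt {σ : Type*} (d k : ℕ) (F : Set ((Fin d → ℕ) → σ))
    (A : (Fin d → ℕ) → σ) (a : Fin d → ℕ) : Prop :=
  ∃ S ∈ F, ∀ j : Fin d → ℕ, (∀ i, 1 ≤ j i ∧ j i ≤ k) →
    A (fun i => a i + j i - 1) = S j

/-- `A` contains an `F`-copy lying inside the set `X`. -/
def HasCopyIn {σ : Type*} (n d k : ℕ) (F : Set ((Fin d → ℕ) → σ))
    (A : (Fin d → ℕ) → σ) (X : Set (Fin d → ℕ)) : Prop :=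
  ∃ a, ValidLoc n d k a ∧ HasCopyAt d k F A a ∧ kbox d k a ⊆ X

/-- `A` satisfies the `k`-local property `P(F)`: it contains no `F`-copy. -/
def SatisfiesP {σ : Type*} (n d k : ℕ) (F : Set ((Fin d → ℕ) → σ))
    (A : (Fin d → ℕ) → σ) : Prop :=
  ¬ ∃ a, ValidLoc n d k a ∧ HasCopyAt d k F A a

/-- `A` is `ε`-far from `P(F)`: every array satisfying `P(F)` differs from `A`
in at least `ε·n^d` entries of `[n]^d`. -/
def FarFrom {σ : Type*} (n d k : ℕ) (F : Set ((Fin d → ℕ) → σ)) (ε : ℝ)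
    (A : (Fin d → ℕ) → σ) : Prop :=
  ∀ A' : (Fin d → ℕ) → σ, SatisfiesP n d k F A' →
    ε * (n : ℝ) ^ d ≤ ({x | x ∈ cube n d ∧ A x ≠ A' x}).ncard

/-- A block `B` is `(P,A)`-unrepairable: every array agreeing with `A` on `∂B`
(including `A` itself) contains an `F`-copy lying inside `B̄`. -/
def Unrepairable {σ : Type*} (n d k : ℕ) (F : Set ((Fin d → ℕ) → σ))
    (A : (Fin d → ℕ) → σ) (B : Set (Fin d → ℕ)) : Prop :=
  ∀ A' : (Fin d → ℕ) → σ, (∀ x ∈ blockBoundary n d k B, A' x = A x) →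
    HasCopyIn n d k F A' (blockClosure n d k B)

lemma filter_le_Icc (a b x : ℕ) (h1 : a ≤ x) (h2 : x ≤ b) :
    (Finset.Icc a b).filter (fun y => y ≤ x) = Finset.Icc a x := by
  ext y; simp only [Finset.mem_filter, Finset.mem_Icc]; omega

lemma mem_takeSmallest_Icc {a b ℓ x : ℕ} :
    x ∈ takeSmallest (Finset.Icc a b) ℓ ↔ a ≤ x ∧ x ≤ b ∧ x + 1 ≤ a + ℓ := by
  simp only [takeSmallest, Finset.mem_filter, Finset.mem_Icc]
  constructor
  · rintro ⟨⟨h1, h2⟩, h3⟩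
    rw [filter_le_Icc a b x h1 h2, Nat.card_Icc] at h3
    exact ⟨h1, h2, by omega⟩
  · rintro ⟨h1, h2, h3⟩
    refine ⟨⟨h1, h2⟩, ?_⟩
    rw [filter_le_Icc a b x h1 h2, Nat.card_Icc]
    omega

lemma natDist_def (a b : ℕ) : Nat.dist a b = (a - b) + (b - a) := rfl

/-- If `A` is `ε`-far from the `k`-local property `P(F)` and
`G ∈ 𝒢(n,d,k,w)` with `w ≥ k`, then either some `G`-block is `(P,A)`-unrepairable, or at
least an `ε`-fraction of the `G`-blocks `B` are such that `A` contains an `F`-copy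
inside `B̄`. -/
theorem far_implies_unrepairable_or_many_bad_blocks (n d k w : ℕ) (hd : 1 ≤ d)
    (hk : 2 ≤ k) (hkw : k ≤ w) (hwn : w ≤ n) {σ : Type*}
    (F : Set ((Fin d → ℕ) → σ)) (ε : ℝ) (hε : 0 < ε)
    (A : (Fin d → ℕ) → σ) (hA : FarFrom n d k F ε A)
    (G : Set (Fin d → ℕ)) (hG : IsGrid n d k w G) :
    (∃ B, IsBlock n d G B ∧ Unrepairable n d k F A B) ∨
      ε * ({B : Set (Fin d → ℕ) | IsBlock n d G B}.ncard : ℝ) ≤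
        (({B : Set (Fin d → ℕ) |
            IsBlock n d G B ∧ HasCopyIn n d k F A (blockClosure n d k B)}).ncard : ℝ) := by
  classical
  obtain ⟨P, rfl⟩ := hG
  choose a b ha1 hab hbn hI using P.interval
  have hkn : k ≤ n := le_trans hkw hwn
  have hsize : ∀ j, w ≤ b j + 1 - a j ∧ b j + 1 - a j ≤ w + 1 := by
    intro j
    have h := P.size j
    rw [hI j, Nat.card_Icc] at h
    have := hab j
    omega
  have hord : ∀ j j' : Fin P.t, j < j' → b j < a j' := by
    intro j j' hjj
    exact P.ordered j j' hjj (b j)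
      (by rw [hI j, Finset.mem_Icc]; exact ⟨hab j, le_refl _⟩) (a j')
      (by rw [hI j', Finset.mem_Icc]; exact ⟨le_refl _, hab j'⟩)
  have hcover : ∀ x, 1 ≤ x → x ≤ n → ∃ j, a j ≤ x ∧ x ≤ b j := by
    intro x h1 h2
    obtain ⟨j, hj⟩ := P.cover x (by rw [Finset.mem_Icc]; omega)
    rw [hI j, Finset.mem_Icc] at hj
    exact ⟨j, hj⟩
  have hIdisj : ∀ j j' : Fin P.t, j ≠ j' → ∀ x, a j ≤ x → x ≤ b j →
      a j' ≤ x → x ≤ b j' → False := by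
    intro j j' hne x h1 h2 h3 h4
    rcases lt_or_gt_of_ne hne with h | h
    · have := hord j j' h; omega
    · have := hord j' j h; omega
  set D : Fin P.t → Finset ℕ := fun j => Finset.Icc (a j + k - 1) (b j) with hD
  have hmemD : ∀ {j x}, x ∈ D j ↔ a j + k - 1 ≤ x ∧ x ≤ b j := by
    intro j x; rw [hD]; exact Finset.mem_Icc
  have hDne : ∀ j, a j + k - 1 ∈ D j := by
    intro j; rw [hmemD]; have := hsize j; omega
  have hDsub : ∀ j x, x ∈ D j → 1 ≤ x ∧ x ≤ n := by
    intro j x hx; rw [hmemD] at hx; have := ha1 j; have := hbn j; omega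
  have hDsep : ∀ {j j' x y}, j ≠ j' → x ∈ D j → y ∈ D j' → Nat.dist x y < k → False := by
    intro j j' x y hne hx hy hdist
    rw [hmemD] at hx hy
    rw [natDist_def] at hdist
    rcases lt_or_gt_of_ne hne with h | h
    · have := hord j j' h; omega
    · have := hord j' j h; omega
  have hgrid : ∀ x : Fin d → ℕ, x ∈ gridOf n d k w P ↔ x ∈ cube n d ∧
      ∃ i : Fin d, ∃ j, a j ≤ x i ∧ x i ≤ b j ∧ x i + 1 ≤ a j + (k - 1) := by
    intro x
    constructor
    · rintro ⟨hc, i, j, hmem⟩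
      rw [hI j, mem_takeSmallest_Icc] at hmem
      exact ⟨hc, i, j, hmem.1, hmem.2.1, hmem.2.2⟩
    · rintro ⟨hc, i, j, h1, h2, h3⟩
      exact ⟨hc, i, j, by rw [hI j, mem_takeSmallest_Icc]; exact ⟨h1, h2, h3⟩⟩
  set pb : (Fin d → Fin P.t) → Set (Fin d → ℕ) := fun J => {x | ∀ i, x i ∈ D (J i)} with hpb
  have hmempb : ∀ {J x}, x ∈ pb J ↔ ∀ i, x i ∈ D (J i) := by
    intro J x; rw [hpb]; exact Iff.rfl
  have hpbsub : ∀ J, pb J ⊆ cube n d \ gridOf n d k w P := by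
    intro J x hx
    rw [hmempb] at hx
    have hxc : x ∈ cube n d := fun i => hDsub _ _ (hx i)
    refine ⟨hxc, fun hxG => ?_⟩
    rw [hgrid] at hxG
    obtain ⟨-, i, j, h1, h2, h3⟩ := hxG
    have hxi := hx i
    rw [hmemD] at hxi
    by_cases hje : j = J i
    · subst hje; omega
    · exact hIdisj j (J i) hje (x i) h1 h2 (by omega) hxi.2
  have hcompl : ∀ x : Fin d → ℕ, x ∈ cube n d \ gridOf n d k w P → ∃ J, x ∈ pb J := by
    rintro x ⟨hc, hng⟩
    have hex : ∀ i : Fin d, ∃ j, x i ∈ D j := by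
      intro i
      obtain ⟨j, h1, h2⟩ := hcover (x i) (hc i).1 (hc i).2
      refine ⟨j, ?_⟩
      rw [hmemD]
      refine ⟨?_, h2⟩
      by_contra hlt
      exact hng ((hgrid x).mpr ⟨hc, i, j, h1, h2, by omega⟩)
    choose J hJ using hex
    exact ⟨J, hmempb.mpr hJ⟩
  have hsame : ∀ {J J' : Fin d → Fin P.t} {x y}, x ∈ pb J → y ∈ pb J' →
      (∀ i, Nat.dist (x i) (y i) < k) → J = J' := by
    intro J J' x y hx hy hdd
    rw [hmempb] at hx hy
    funext i
    by_contra hne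
    exact hDsep hne (hx i) (hy i) (hdd i)
  have hnbr_dist : ∀ {x y : Fin d → ℕ}, Neighbor x y → ∀ i, Nat.dist (x i) (y i) ≤ 1 := by
    intro x y hn i
    have h1 : Nat.dist (x i) (y i) ≤ ∑ i', Nat.dist (x i') (y i') :=
      Finset.single_le_sum (f := fun i' => Nat.dist (x i') (y i'))
        (fun _ _ => Nat.zero_le _) (Finset.mem_univ i)
    have h2 : (∑ i', Nat.dist (x i') (y i')) = 1 := hn
    omega
  have hconn : ∀ (J : Fin d → Fin P.t) (m : ℕ) (x y : Fin d → ℕ),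
      (∑ i, Nat.dist (x i) (y i)) = m → x ∈ pb J → y ∈ pb J →
      Relation.ReflTransGen
        (fun u v => u ∈ cube n d \ gridOf n d k w P ∧
          v ∈ cube n d \ gridOf n d k w P ∧ Neighbor u v) x y := by
    intro J m
    induction m using Nat.strong_induction_on with
    | _ m ih =>
      intro x y hm hx hy
      rcases Nat.eq_zero_or_pos m with h0 | hpos
      · subst h0
        have hxy : x = y := by
          funext i
          have hz : Nat.dist (x i) (y i) = 0 :=
            (Finset.sum_eq_zero_iff.mp hm) i (Finset.mem_univ i)
          rw [natDist_def] at hz; omega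
        rw [hxy]
      · have hex : ∃ i, x i ≠ y i := by
          by_contra hno
          push_neg at hno
          have hz : (∑ i, Nat.dist (x i) (y i)) = 0 :=
            Finset.sum_eq_zero (fun i _ => by rw [hno i, Nat.dist_self])
          omega
        obtain ⟨i, hi⟩ := hex
        have hxiD := hmempb.mp hx i
        have hyiD := hmempb.mp hy i
        rw [hmemD] at hxiD hyiD
        have ha1i := ha1 (J i)
        set z : ℕ := if x i < y i then x i + 1 else x i - 1 with hz
        set x' := Function.update x i z with hx'
        have hzD : a (J i) + k - 1 ≤ z ∧ z ≤ b (J i) := by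
          rw [hz]; split_ifs <;> omega
        have hx'pb : x' ∈ pb J := by
          rw [hmempb]
          intro i'
          rcases eq_or_ne i' i with rfl | hne
          · rw [hx', Function.update_self, hmemD]; exact hzD
          · rw [hx', Function.update_of_ne hne]; exact hmempb.mp hx i'
        have hd1 : Nat.dist (x i) z = 1 := by
          rw [hz]; split_ifs <;> (rw [natDist_def]; omega)
        have hdz : Nat.dist z (y i) + 1 = Nat.dist (x i) (y i) := by
          rw [hz]; split_ifs <;> (simp only [natDist_def]; omega)
        have hsum1 : (∑ i', Nat.dist (x i') (x' i')) = 1 := by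
          rw [← Finset.add_sum_erase _ _ (Finset.mem_univ i)]
          have he : (∑ i' ∈ Finset.univ.erase i, Nat.dist (x i') (x' i')) = 0 := by
            apply Finset.sum_eq_zero
            intro i' hi'
            rw [hx', Function.update_of_ne (Finset.ne_of_mem_erase hi'), Nat.dist_self]
          rw [he, hx', Function.update_self, hd1]
        have hsum2 : (∑ i', Nat.dist (x' i') (y i')) = m - 1 := by
          rw [← Finset.add_sum_erase _ _ (Finset.mem_univ i)]
          rw [← Finset.add_sum_erase _ _ (Finset.mem_univ i)] at hm
          have he : (∑ i' ∈ Finset.univ.erase i, Nat.dist (x' i') (y i')) =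
              (∑ i' ∈ Finset.univ.erase i, Nat.dist (x i') (y i')) := by
            apply Finset.sum_congr rfl
            intro i' hi'
            rw [hx', Function.update_of_ne (Finset.ne_of_mem_erase hi')]
          rw [he, hx', Function.update_self]
          omega
        have hstep : x ∈ cube n d \ gridOf n d k w P ∧
            x' ∈ cube n d \ gridOf n d k w P ∧ Neighbor x x' :=
          ⟨hpbsub J hx, hpbsub J hx'pb, hsum1⟩
        exact Relation.ReflTransGen.head hstep
          (ih (m - 1) (by omega) x' y hsum2 hx'pb hy)
  have hpb_closed : ∀ (J : Fin d → Fin P.t) (u v : Fin d → ℕ), u ∈ pb J →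
      v ∈ cube n d \ gridOf n d k w P → Neighbor u v → v ∈ pb J := by
    intro J u v hu hv hnb
    obtain ⟨J', hv'⟩ := hcompl v hv
    have hJJ : J = J' := hsame hu hv'
      (fun i => lt_of_le_of_lt (hnbr_dist hnb i) (by omega))
    rw [hJJ]; exact hv'
  have hblock_pb : ∀ J, IsBlock n d (gridOf n d k w P) (pb J) := by
    intro J
    refine ⟨⟨fun i => a (J i) + k - 1, hmempb.mpr (fun i => hDne (J i))⟩, hpbsub J, ?_, ?_⟩
    · intro x hx y hy; exact hconn J _ x y rfl hx hy
    · intro x hx y hyc hnb; exact hpb_closed J x y hx hyc hnb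
  have htrans : ∀ (S : Set (Fin d → ℕ)),
      (∀ u v, u ∈ S → v ∈ cube n d \ gridOf n d k w P → Neighbor u v → v ∈ S) →
      ∀ x y, Relation.ReflTransGen
        (fun u v => u ∈ cube n d \ gridOf n d k w P ∧
          v ∈ cube n d \ gridOf n d k w P ∧ Neighbor u v) x y → x ∈ S → y ∈ S := by
    intro S hS x y h hx
    induction h with
    | refl => exact hx
    | tail _ hs ih => exact hS _ _ ih hs.2.1 hs.2.2
  have hblock_iff : ∀ B, IsBlock n d (gridOf n d k w P) B ↔ ∃ J, B = pb J := by
    intro B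
    constructor
    · rintro ⟨⟨x₀, hx₀⟩, hBsub, hBconn, hBcl⟩
      obtain ⟨J, hx₀J⟩ := hcompl x₀ (hBsub hx₀)
      refine ⟨J, Set.Subset.antisymm ?_ ?_⟩
      · intro y hy
        exact htrans (pb J) (hpb_closed J) x₀ y (hBconn x₀ hx₀ y hy) hx₀J
      · intro z hz
        exact htrans B (fun u v hu hv hn => hBcl u hu v hv hn) x₀ z (hconn J _ x₀ z rfl hx₀J hz) hx₀
    · rintro ⟨J, rfl⟩; exact hblock_pb J
  have hbox : ∀ aa : Fin d → ℕ, ValidLoc n d k aa → ∃ J : Fin d → Fin P.t,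
      (∀ x ∈ kbox d k aa, x ∈ blockClosure n d k (pb J)) ∧
      (∀ x ∈ kbox d k aa, x ∉ pb J → ∀ J', x ∉ pb J') := by
    intro aa hval
    have hvi : ∀ i, 1 ≤ aa i ∧ aa i + k - 1 ≤ n := by
      intro i; have := hval i; omega
    have hexv : ∀ i, ∃ v : ℕ, ∃ j, aa i ≤ v ∧ v ≤ aa i + k - 1 ∧ v ∈ D j := by
      intro i
      obtain ⟨j, hj1, hj2⟩ := hcover (aa i + k - 1) (by have := hvi i; omega) (hvi i).2
      by_cases hcase : a j + k - 1 ≤ aa i + k - 1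
      · exact ⟨aa i + k - 1, j, by have := hvi i; omega, le_refl _, hmemD.mpr ⟨hcase, hj2⟩⟩
      · push_neg at hcase
        have ha1j := ha1 j
        have hvi' := hvi i
        obtain ⟨j', hj'1, hj'2⟩ := hcover (a j - 1) (by omega) (by have := hbn j; have := hab j; omega)
        have hne : j' ≠ j := by intro h; subst h; omega
        have hjlt : j' < j := by
          rcases lt_or_gt_of_ne hne with h | h
          · exact h
          · exfalso; have := hord j j' h; have := hab j; omega
        have hbj' : b j' = a j - 1 := by
          have h1 := hord j' j hjlt; omega
        have hsz := hsize j'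
        exact ⟨a j - 1, j', by omega, by omega, hmemD.mpr ⟨by omega, by omega⟩⟩
    choose v jv hv1 hv2 hv3 using hexv
    have hvpb : v ∈ pb jv := hmempb.mpr hv3
    refine ⟨jv, ?_, ?_⟩
    · intro x hx
      refine ⟨fun i => ⟨by have := hx i; have := hvi i; have := hval i; omega,
        by have := hx i; have := hvi i; omega⟩, v, hvpb, fun i => ?_⟩
      rw [natDist_def]
      have := hx i; have := hv1 i; have := hv2 i
      omega
    · intro x hx hnotpb J' hx'
      have hJJ : J' = jv := hsame hx' hvpb (fun i => by
        rw [natDist_def]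
        have := hx i; have := hv1 i; have := hv2 i
        omega)
      exact hnotpb (hJJ ▸ hx')
  by_cases hrep : ∃ B, IsBlock n d (gridOf n d k w P) B ∧ Unrepairable n d k F A B
  · exact Or.inl hrep
  right
  push_neg at hrep
  set Bad : (Fin d → Fin P.t) → Prop :=
    fun J => HasCopyIn n d k F A (blockClosure n d k (pb J)) with hBadDef
  have hfix0 : ∀ J : Fin d → Fin P.t, ∃ A' : (Fin d → ℕ) → σ,
      (∀ x ∈ blockBoundary n d k (pb J), A' x = A x) ∧
      ¬ HasCopyIn n d k F A' (blockClosure n d k (pb J)) := by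
    intro J
    have h := hrep (pb J) (hblock_pb J)
    unfold Unrepairable at h
    push_neg at h
    exact h
  have hfix : ∀ J : Fin d → Fin P.t, ∃ A' : (Fin d → ℕ) → σ,
      (∀ x ∈ blockBoundary n d k (pb J), A' x = A x) ∧
      ¬ HasCopyIn n d k F A' (blockClosure n d k (pb J)) ∧ (¬ Bad J → A' = A) := by
    intro J
    by_cases hb : Bad J
    · obtain ⟨A', h1, h2⟩ := hfix0 J
      exact ⟨A', h1, h2, fun h => absurd hb h⟩
    · exact ⟨A, fun x _ => rfl, hb, fun _ => rfl⟩
  choose fix hfixbd hfixno hfixA using hfix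
  set A' : (Fin d → ℕ) → σ :=
    fun x => if h : ∃ J, x ∈ pb J then fix h.choose x else A x with hA'def
  have hpbdisj : ∀ {J J' : Fin d → Fin P.t} {x}, x ∈ pb J → x ∈ pb J' → J = J' :=
    fun hx hx' => hsame hx hx' (fun i => by rw [Nat.dist_self]; omega)
  have hA'on : ∀ {J x}, x ∈ pb J → A' x = fix J x := by
    intro J x hx
    rw [hA'def]
    have hex : ∃ J, x ∈ pb J := ⟨J, hx⟩
    simp only [dif_pos hex]
    rw [hpbdisj hex.choose_spec hx]
  have hA'off : ∀ {x}, (∀ J, x ∉ pb J) → A' x = A x := by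
    intro x hx
    rw [hA'def]
    exact dif_neg (fun h => hx h.choose h.choose_spec)
  have hsat : SatisfiesP n d k F A' := by
    rintro ⟨aa, hval, hcopy⟩
    obtain ⟨J, hcl, hbd⟩ := hbox aa hval
    have hAeq : ∀ x ∈ kbox d k aa, A' x = fix J x := by
      intro x hx
      by_cases hxp : x ∈ pb J
      · exact hA'on hxp
      · have hnone := hbd x hx hxp
        rw [hA'off hnone]
        exact (hfixbd J x ⟨hcl x hx, hxp⟩).symm
    apply hfixno J
    refine ⟨aa, hval, ?_, fun x hx => hcl x hx⟩
    obtain ⟨S, hS, hSeq⟩ := hcopy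
    refine ⟨S, hS, fun j hj => ?_⟩
    have hmem : (fun i => aa i + j i - 1) ∈ kbox d k aa := by
      intro i
      show aa i ≤ aa i + j i - 1 ∧ aa i + j i - 1 ≤ aa i + k - 1
      have := (hj i).1; have := (hj i).2
      omega
    rw [← hAeq _ hmem]
    exact hSeq j hj
  have hfar := hA A' hsat
  set badF : Finset (Fin d → Fin P.t) := Finset.univ.filter (fun J => Bad J) with hbadF
  have hsubset : {x | x ∈ cube n d ∧ A x ≠ A' x} ⊆
      ↑(badF.biUnion (fun J => Fintype.piFinset (fun i => D (J i)))) := by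
    rintro x ⟨hxc, hxne⟩
    by_cases hex : ∃ J, x ∈ pb J
    · obtain ⟨J, hxJ⟩ := hex
      have hfixne : A x ≠ fix J x := by rw [← hA'on hxJ]; exact hxne
      have hBadJ : Bad J := by
        by_contra hnb
        rw [hfixA J hnb] at hfixne
        exact hfixne rfl
      rw [Finset.coe_biUnion]
      have h1 : J ∈ badF := by
        rw [hbadF]
        exact Finset.mem_filter.mpr ⟨Finset.mem_univ J, hBadJ⟩
      have h2 : x ∈ Fintype.piFinset (fun i => D (J i)) := by
        rw [Fintype.mem_piFinset]
        exact hmempb.mp hxJ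
      exact Set.mem_biUnion h1 h2
    · push_neg at hex
      exact absurd (hA'off hex).symm hxne
  have hDcard : ∀ j, (D j).card ≤ w + 2 - k := by
    intro j; rw [hD]; rw [Nat.card_Icc]; have := hsize j; omega
  have hpicard : ∀ J : Fin d → Fin P.t,
      (Fintype.piFinset (fun i => D (J i))).card ≤ (w + 2 - k) ^ d := by
    intro J
    rw [Fintype.card_piFinset]
    calc (∏ i, (D (J i)).card) ≤ ∏ _i : Fin d, (w + 2 - k) :=
          Finset.prod_le_prod' (fun i _ => hDcard (J i))
      _ = (w + 2 - k) ^ d := by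
          rw [Finset.prod_const, Finset.card_univ, Fintype.card_fin]
  have hcount : ({x | x ∈ cube n d ∧ A x ≠ A' x}).ncard ≤ badF.card * (w + 2 - k) ^ d := by
    calc ({x | x ∈ cube n d ∧ A x ≠ A' x}).ncard
        ≤ (↑(badF.biUnion (fun J => Fintype.piFinset (fun i => D (J i)))) : Set (Fin d → ℕ)).ncard :=
          Set.ncard_le_ncard hsubset (Finset.finite_toSet _)
      _ = (badF.biUnion (fun J => Fintype.piFinset (fun i => D (J i)))).card :=
          Set.ncard_coe_finset _
      _ ≤ ∑ J ∈ badF, (Fintype.piFinset (fun i => D (J i))).card :=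
          Finset.card_biUnion_le
      _ ≤ ∑ _J ∈ badF, (w + 2 - k) ^ d := Finset.sum_le_sum (fun J _ => hpicard J)
      _ = badF.card * (w + 2 - k) ^ d := by rw [Finset.sum_const, smul_eq_mul]
  have hpb_inj : Function.Injective pb := by
    intro J J' h
    have hmm : (fun i => a (J i) + k - 1) ∈ pb J := hmempb.mpr (fun i => hDne (J i))
    exact hpbdisj hmm (h ▸ hmm)
  have hblocks_card : {B : Set (Fin d → ℕ) | IsBlock n d (gridOf n d k w P) B}.ncard =
      P.t ^ d := by
    have heq : {B : Set (Fin d → ℕ) | IsBlock n d (gridOf n d k w P) B} =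
        pb '' Set.univ := by
      ext B
      simp only [Set.mem_setOf_eq, Set.image_univ, Set.mem_range]
      rw [hblock_iff]
      exact ⟨fun ⟨J, h⟩ => ⟨J, h.symm⟩, fun ⟨J, h⟩ => ⟨J, h.symm⟩⟩
    rw [heq, Set.ncard_image_of_injective _ hpb_inj, Set.ncard_univ,
      Nat.card_eq_fintype_card]
    simp [Fintype.card_fun]
  have hbad_card : {B : Set (Fin d → ℕ) | IsBlock n d (gridOf n d k w P) B ∧
      HasCopyIn n d k F A (blockClosure n d k B)}.ncard = badF.card := by
    have heq : {B : Set (Fin d → ℕ) | IsBlock n d (gridOf n d k w P) B ∧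
        HasCopyIn n d k F A (blockClosure n d k B)} = pb '' {J | Bad J} := by
      ext B
      simp only [Set.mem_setOf_eq, Set.mem_image]
      constructor
      · rintro ⟨hB, hcopy⟩
        obtain ⟨J, rfl⟩ := (hblock_iff B).mp hB
        exact ⟨J, hcopy, rfl⟩
      · rintro ⟨J, hJ, rfl⟩
        exact ⟨hblock_pb J, hJ⟩
    rw [heq, Set.ncard_image_of_injective _ hpb_inj]
    have hset : {J : Fin d → Fin P.t | Bad J} = ↑badF := by
      ext J; simp [hbadF]
    rw [hset, Set.ncard_coe_finset]
  have htw : P.t * w ≤ n := by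
    have hdisj : ∀ j ∈ (Finset.univ : Finset (Fin P.t)), ∀ j' ∈ (Finset.univ : Finset (Fin P.t)),
        j ≠ j' → Disjoint (P.I j) (P.I j') := by
      intro j _ j' _ hne
      rw [Finset.disjoint_left]
      intro x hx hx'
      rw [hI j, Finset.mem_Icc] at hx
      rw [hI j', Finset.mem_Icc] at hx'
      exact hIdisj j j' hne x hx.1 hx.2 hx'.1 hx'.2
    have hsum := Finset.card_biUnion hdisj
    have hsub : Finset.univ.biUnion P.I ⊆ Finset.Icc 1 n := by
      intro x hx
      rw [Finset.mem_biUnion] at hx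
      obtain ⟨j, _, hj⟩ := hx
      rw [hI j, Finset.mem_Icc] at hj
      rw [Finset.mem_Icc]
      have := ha1 j; have := hbn j; omega
    have h1 : (∑ j : Fin P.t, (P.I j).card) ≤ n := by
      rw [← hsum]
      calc (Finset.univ.biUnion P.I).card ≤ (Finset.Icc 1 n).card :=
            Finset.card_le_card hsub
        _ = n := by rw [Nat.card_Icc]; omega
    have h2 : P.t * w ≤ ∑ j : Fin P.t, (P.I j).card := by
      calc P.t * w = ∑ _j : Fin P.t, w := by
            rw [Finset.sum_const, Finset.card_univ, Fintype.card_fin, smul_eq_mul]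
        _ ≤ _ := Finset.sum_le_sum (fun j _ => by rcases P.size j with h | h <;> omega)
    omega
  rw [hblocks_card, hbad_card]
  have hs2 : 2 ≤ w + 2 - k := by omega
  have hts : P.t * (w + 2 - k) ≤ n :=
    le_trans (Nat.mul_le_mul_left _ (by omega)) htw
  have hkey : ((P.t : ℝ)) ^ d * ((w + 2 - k : ℕ) : ℝ) ^ d ≤ (n : ℝ) ^ d := by
    rw [← mul_pow]
    apply pow_le_pow_left₀ (by positivity)
    exact_mod_cast hts
  have hspos : (0 : ℝ) < ((w + 2 - k : ℕ) : ℝ) ^ d := by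
    apply pow_pos
    exact_mod_cast Nat.lt_of_lt_of_le Nat.zero_lt_two hs2
  have hchain : ε * ((P.t : ℝ)) ^ d * ((w + 2 - k : ℕ) : ℝ) ^ d ≤
      (badF.card : ℝ) * ((w + 2 - k : ℕ) : ℝ) ^ d := by
    calc ε * ((P.t : ℝ)) ^ d * ((w + 2 - k : ℕ) : ℝ) ^ d
        = ε * (((P.t : ℝ)) ^ d * ((w + 2 - k : ℕ) : ℝ) ^ d) := by ring
      _ ≤ ε * (n : ℝ) ^ d := mul_le_mul_of_nonneg_left hkey (le_of_lt hε)
      _ ≤ (({x | x ∈ cube n d ∧ A x ≠ A' x}).ncard : ℝ) := hfar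
      _ ≤ (badF.card : ℝ) * ((w + 2 - k : ℕ) : ℝ) ^ d := by
          have := hcount
          push_cast
          exact_mod_cast Nat.cast_le.mpr hcount
  have hfin := le_of_mul_le_mul_right hchain hspos
  push_cast
  exact hfin
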